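/- arXiv:1709.01906 — 2 statements merged into one kernel-verified Lean document; each statement's English description precedes it below -/
import Mathlib

section
/- Let q>0, λ>0 and g ∈ L^∞(Ω). If u and v are both weak solutions of the stationary problem (S): u + λ((−Δ)^s u − u^{-q}) = g in Ω, u = 0 in ℝⁿ∖Ω, then u = v a.e. in ℝⁿ. -/
open MeasureTheory Set Filter
open scoped ENNReal RealInnerProductSpace

noncomputable section

/-- Euclidean space ℝⁿ. -/
abbrev Eu (n : ℕ) : Type := EuclideanSpace ℝ (Fin n)

/-- The normalizing constant `C_n^s = π^{-n/2} 2^{2s-1} s Γ((n+2s)/2)/Γ(1-s)`. -/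
def Cns (n : ℕ) (s : ℝ) : ℝ :=
  Real.pi ^ (-(n : ℝ) / 2) * (2 : ℝ) ^ (2 * s - 1) * s *
    Real.Gamma (((n : ℝ) + 2 * s) / 2) / Real.Gamma (1 - s)

/-- `Q = ℝ²ⁿ ∖ ((ℝⁿ∖Ω) × (ℝⁿ∖Ω))`. -/
def Qset {n : ℕ} (Ω : Set (Eu n)) : Set (Eu n × Eu n) := (Ωᶜ ×ˢ Ωᶜ)ᶜ

/-- The Gagliardo kernel `(u(x)-u(y))(v(x)-v(y))/|x-y|^{n+2s}`. -/
def gKer {n : ℕ} (s : ℝ) (u v : Eu n → ℝ) (p : Eu n × Eu n) : ℝ :=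
  (u p.1 - u p.2) * (v p.1 - v p.2) / dist p.1 p.2 ^ ((n : ℝ) + 2 * s)

/-- The bilinear form `E(u,v) = C_n^s ∫∫_Q (u(x)-u(y))(v(x)-v(y))/|x-y|^{n+2s}`. -/
def bilinE {n : ℕ} (s : ℝ) (Ω : Set (Eu n)) (u v : Eu n → ℝ) : ℝ :=
  Cns n s * ∫ p in Qset Ω, gKer s u v p

/-- `‖u‖²_{X₀(Ω)}`. -/
def normX0sq {n : ℕ} (s : ℝ) (Ω : Set (Eu n)) (u : Eu n → ℝ) : ℝ := bilinE s Ω u u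

/-- `‖u‖_{X₀(Ω)}`. -/
def normX0 {n : ℕ} (s : ℝ) (Ω : Set (Eu n)) (u : Eu n → ℝ) : ℝ :=
  Real.sqrt (normX0sq s Ω u)

/-- `u ∈ X₀(Ω)`: measurable, vanishing a.e. outside `Ω`, square integrable on `Ω`,
with finite Gagliardo energy. -/
def MemX0 {n : ℕ} (s : ℝ) (Ω : Set (Eu n)) (u : Eu n → ℝ) : Prop :=
  Measurable u ∧ (∀ᵐ x : Eu n, x ∉ Ω → u x = 0) ∧
    MemLp u 2 (volume.restrict Ω) ∧ IntegrableOn (gKer s u u) (Qset Ω)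

/-- `Ω` has `C²` boundary: near every boundary point, `Ω` is given by a `C²` local
defining function with nonvanishing differential. -/
def HasC2Boundary {n : ℕ} (Ω : Set (Eu n)) : Prop :=
  ∀ x ∈ frontier Ω, ∃ U : Set (Eu n), IsOpen U ∧ x ∈ U ∧
    ∃ g : Eu n → ℝ, ContDiff ℝ 2 g ∧ (∀ y ∈ U, (y ∈ Ω ↔ g y < 0)) ∧
      ∀ y ∈ U ∩ frontier Ω, fderiv ℝ g y ≠ 0

/-- Bounded domain (open, connected, nonempty) with `C²` boundary. -/
def GoodDomain {n : ℕ} (Ω : Set (Eu n)) : Prop :=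
  IsOpen Ω ∧ Bornology.IsBounded Ω ∧ IsConnected Ω ∧ HasC2Boundary Ω

/-- `δ(x) = dist(x, ∂Ω)`. -/
def bdry {n : ℕ} (Ω : Set (Eu n)) (x : Eu n) : ℝ := Metric.infDist x (frontier Ω)

/-- `g ∈ L^∞(Ω)`. -/
def MemLinfty {n : ℕ} (Ω : Set (Eu n)) (g : Eu n → ℝ) : Prop :=
  Measurable g ∧ ∃ M : ℝ, ∀ᵐ x ∂(volume.restrict Ω), |g x| ≤ M

/-- `ess inf_K u > 0` for every compact `K ⊆ Ω`. -/
def PosOnCompacts {n : ℕ} (Ω : Set (Eu n)) (u : Eu n → ℝ) : Prop :=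
  ∀ K : Set (Eu n), IsCompact K → K ⊆ Ω →
    ∃ c : ℝ, 0 < c ∧ ∀ᵐ x ∂(volume.restrict K), c ≤ u x

/-- The conical shell `𝒞` (depending on `q`, `s` and a fixed `r > diam Ω`). -/
def InCone {n : ℕ} (s q r : ℝ) (Ω : Set (Eu n)) (v : Eu n → ℝ) : Prop :=
  MemLinfty Ω v ∧ ∃ k₁ k₂ : ℝ, 0 < k₁ ∧ 0 < k₂ ∧
    ∀ᵐ x ∂(volume.restrict Ω),
      (q < 1 → k₁ * bdry Ω x ^ s ≤ v x ∧ v x ≤ k₂ * bdry Ω x ^ s) ∧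
      (q = 1 →
        k₁ * (bdry Ω x ^ s * Real.sqrt (Real.log (r / bdry Ω x ^ s))) ≤ v x ∧
        v x ≤ k₂ * (bdry Ω x ^ s * Real.sqrt (Real.log (r / bdry Ω x ^ s)))) ∧
      (1 < q →
        k₁ * bdry Ω x ^ (2 * s / (q + 1)) ≤ v x ∧
        v x ≤ k₂ * bdry Ω x ^ (2 * s / (q + 1)))

/-- Weak solution of `(S)`: `u + λ((−Δ)^s u − u^{-q}) = g` in `Ω`, `u = 0` outside `Ω`. -/
def IsWeakSolS {n : ℕ} (s q lam : ℝ) (Ω : Set (Eu n)) (g u : Eu n → ℝ) : Prop :=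
  MemX0 s Ω u ∧ PosOnCompacts Ω u ∧
    ∀ φ : Eu n → ℝ, MemX0 s Ω φ →
      IntegrableOn (fun x => u x ^ (-q) * φ x) Ω ∧
      (∫ x in Ω, u x * φ x) + lam * (bilinE s Ω u φ - ∫ x in Ω, u x ^ (-q) * φ x) =
        ∫ x in Ω, g x * φ x

/-- `u ∈ C^α(ℝⁿ)`. -/
def HolderCα {n : ℕ} (α : ℝ) (u : Eu n → ℝ) : Prop :=
  ∃ C : ℝ, 0 < C ∧ ∀ x y : Eu n, |u x - u y| ≤ C * dist x y ^ α

/-- Hölder regularity with exponent `α = s` if `q<1`, `α = s-ε` (any small `ε>0`) if `q=1`,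
and `α = 2s/(q+1)` if `q>1`. -/
def RegAlpha {n : ℕ} (s q : ℝ) (u : Eu n → ℝ) : Prop :=
  (q < 1 → HolderCα s u) ∧
  (q = 1 → ∃ ε₀ : ℝ, 0 < ε₀ ∧ ∀ ε : ℝ, 0 < ε → ε < ε₀ → HolderCα (s - ε) u) ∧
  (1 < q → HolderCα (2 * s / (q + 1)) u)

lemma gKer_self_nonneg {n : ℕ} (s : ℝ) (u : Eu n → ℝ) (p : Eu n × Eu n) :
    0 ≤ gKer s u u p :=
  div_nonneg (mul_self_nonneg _) (Real.rpow_nonneg dist_nonneg _)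

lemma abs_gKer_le {n : ℕ} (s : ℝ) (u w : Eu n → ℝ) (p : Eu n × Eu n) :
    |gKer s u w p| ≤ gKer s u u p + gKer s w w p := by
  unfold gKer
  set d : ℝ := dist p.1 p.2 ^ ((n : ℝ) + 2 * s) with hd
  have hd0 : 0 ≤ d := Real.rpow_nonneg dist_nonneg _
  rcases hd0.eq_or_lt with h | h
  · simp [← h]
  · set A := u p.1 - u p.2
    set B := w p.1 - w p.2
    have h1 : |A * B| ≤ A * A + B * B := by
      rw [abs_mul]
      nlinarith [sq_nonneg (|A| - |B|), abs_nonneg A, abs_nonneg B, sq_abs A, sq_abs B]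
    calc |A * B / d| = |A * B| / d := by rw [abs_div, abs_of_pos h]
    _ ≤ (A * A + B * B) / d := by gcongr
    _ = A * A / d + B * B / d := add_div _ _ _

lemma abs_gKer_sub_le {n : ℕ} (s : ℝ) (u v : Eu n → ℝ) (p : Eu n × Eu n) :
    |gKer s (fun x => u x - v x) (fun x => u x - v x) p|
      ≤ 2 * gKer s u u p + 2 * gKer s v v p := by
  unfold gKer
  set d : ℝ := dist p.1 p.2 ^ ((n : ℝ) + 2 * s) with hd
  have hd0 : 0 ≤ d := Real.rpow_nonneg dist_nonneg _
  rcases hd0.eq_or_lt with h | h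
  · simp [← h]
  · set A := u p.1 - u p.2
    set B := v p.1 - v p.2
    have hnum : (u p.1 - v p.1 - (u p.2 - v p.2)) * (u p.1 - v p.1 - (u p.2 - v p.2))
        = (A - B) * (A - B) := by ring
    rw [hnum]
    have h1 : |(A - B) * (A - B)| ≤ 2 * (A * A) + 2 * (B * B) := by
      rw [abs_of_nonneg (mul_self_nonneg _)]; nlinarith [sq_nonneg (A + B)]
    calc |(A - B) * (A - B) / d| = |(A - B) * (A - B)| / d := by
          rw [abs_div, abs_of_pos h]
    _ ≤ (2 * (A * A) + 2 * (B * B)) / d := by gcongr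
    _ = 2 * (A * A / d) + 2 * (B * B / d) := by ring

lemma gKer_meas {n : ℕ} (s : ℝ) {u w : Eu n → ℝ} (hs0 : 0 < s)
    (hu : Measurable u) (hw : Measurable w) : Measurable (gKer s u w) := by
  have hc : Continuous fun p : Eu n × Eu n => dist p.1 p.2 ^ ((n : ℝ) + 2 * s) := by
    have : (0:ℝ) ≤ (n : ℝ) + 2 * s := by positivity
    exact (Real.continuous_rpow_const this).comp (continuous_fst.dist continuous_snd)
  exact (((hu.comp measurable_fst).sub (hu.comp measurable_snd)).mul
    ((hw.comp measurable_fst).sub (hw.comp measurable_snd))).div hc.measurable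

lemma gKer_sub_left {n : ℕ} (s : ℝ) (u v w : Eu n → ℝ) (p : Eu n × Eu n) :
    gKer s (fun x => u x - v x) w p = gKer s u w p - gKer s v w p := by
  unfold gKer
  rw [← sub_div]
  congr 1
  ring

lemma ae_pos_on {n : ℕ} {Ω : Set (Eu n)} (hne : Ωᶜ.Nonempty) (hop : IsOpen Ω)
    {u : Eu n → ℝ} (h : PosOnCompacts Ω u) :
    ∀ᵐ x ∂(volume.restrict Ω), 0 < u x := by
  set K : ℕ → Set (Eu n) := fun m =>
    Metric.closedBall 0 m ∩ {x | (1 : ℝ) / (m + 1) ≤ Metric.infDist x Ωᶜ} with hK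
  have hKclosed : ∀ m, IsClosed (K m) := fun m =>
    Metric.isClosed_closedBall.inter (isClosed_le continuous_const (Metric.continuous_infDist_pt _))
  have hKcompact : ∀ m, IsCompact (K m) := fun m =>
    (isCompact_closedBall (0 : Eu n) m).of_isClosed_subset (hKclosed m) inter_subset_left
  have hKsub : ∀ m, K m ⊆ Ω := by
    intro m x hx
    have h1 : (0 : ℝ) < 1 / (m + 1) := by positivity
    have h2 : 0 < Metric.infDist x Ωᶜ := lt_of_lt_of_le h1 hx.2
    have := (hop.isClosed_compl.notMem_iff_infDist_pos hne).mpr h2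
    simpa using this
  have hcov : ∀ x ∈ Ω, ∃ m : ℕ, x ∈ K m := by
    intro x hx
    have h2 : 0 < Metric.infDist x Ωᶜ :=
      (hop.isClosed_compl.notMem_iff_infDist_pos hne).mp (by simpa using hx)
    obtain ⟨m, hm⟩ := exists_nat_ge (max ‖x‖ (1 / Metric.infDist x Ωᶜ))
    refine ⟨m, ⟨?_, ?_⟩⟩
    · simpa [Metric.mem_closedBall, dist_zero_right] using
        le_trans (le_max_left _ _) hm
    · have h3 : 1 / Metric.infDist x Ωᶜ ≤ (m : ℝ) + 1 :=
        le_trans (le_trans (le_max_right _ _) hm) (by linarith)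
      have h4 : 1 ≤ Metric.infDist x Ωᶜ * ((m : ℝ) + 1) := by
        rw [div_le_iff₀ h2] at h3; linarith
      show (1 : ℝ) / (m + 1) ≤ Metric.infDist x Ωᶜ
      rw [div_le_iff₀ (by positivity)]
      linarith
  have hae : ∀ m : ℕ, ∀ᵐ x : Eu n, x ∈ K m → 0 < u x := by
    intro m
    obtain ⟨c, hc, hcu⟩ := h (K m) (hKcompact m) (hKsub m)
    have := (ae_restrict_iff' (hKclosed m).measurableSet).mp hcu
    filter_upwards [this] with x hx hxm
    exact lt_of_lt_of_le hc (hx hxm)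
  have hall : ∀ᵐ x : Eu n, ∀ m : ℕ, x ∈ K m → 0 < u x := ae_all_iff.mpr hae
  rw [ae_restrict_iff' hop.measurableSet]
  filter_upwards [hall] with x hx hxΩ
  obtain ⟨m, hm⟩ := hcov x hxΩ
  exact hx m hm

/-- Uniqueness of the weak solution of the stationary problem `(S)`. -/
theorem statement_1
    {n : ℕ} {s : ℝ} (hs0 : 0 < s) (hs1 : s < 1) (hns : 2 * s < (n : ℝ))
    {Ω : Set (Eu n)} (hΩ : GoodDomain Ω)
    {q lam : ℝ} (hq : 0 < q) (hlam : 0 < lam)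
    {g : Eu n → ℝ} (hg : MemLinfty Ω g)
    {u v : Eu n → ℝ}
    (hu : IsWeakSolS s q lam Ω g u) (hv : IsWeakSolS s q lam Ω g v) :
    ∀ᵐ x : Eu n, u x = v x := by
  obtain ⟨hop, hbd, -, -⟩ := hΩ
  obtain ⟨⟨humeas, huzero, huL2, huG⟩, huP, huW⟩ := hu
  obtain ⟨⟨hvmeas, hvzero, hvL2, hvG⟩, hvP, hvW⟩ := hv
  have hn : 0 < n := by
    by_contra h
    push_neg at h
    interval_cases n
    · norm_num at hns; linarith
  set w : Eu n → ℝ := fun x => u x - v x with hw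
  have hwmeas : Measurable w := humeas.sub hvmeas
  have hwzero : ∀ᵐ x : Eu n, x ∉ Ω → w x = 0 := by
    filter_upwards [huzero, hvzero] with x h1 h2 hx
    simp [hw, h1 hx, h2 hx]
  have hwL2 : MemLp w 2 (volume.restrict Ω) := huL2.sub hvL2
  have hwG : IntegrableOn (gKer s w w) (Qset Ω) := by
    refine Integrable.mono' ((huG.const_mul 2).add (hvG.const_mul 2))
      (gKer_meas s hs0 hwmeas hwmeas).aestronglyMeasurable (ae_of_all _ fun p => ?_)
    simpa [Real.norm_eq_abs] using abs_gKer_sub_le s u v p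
  have hwX : MemX0 s Ω w := ⟨hwmeas, hwzero, hwL2, hwG⟩
  have hGuw : IntegrableOn (gKer s u w) (Qset Ω) :=
    (huG.add hwG).mono' (gKer_meas s hs0 humeas hwmeas).aestronglyMeasurable
      (ae_of_all _ fun p => by simpa [Real.norm_eq_abs] using abs_gKer_le s u w p)
  have hGvw : IntegrableOn (gKer s v w) (Qset Ω) :=
    (hvG.add hwG).mono' (gKer_meas s hs0 hvmeas hwmeas).aestronglyMeasurable
      (ae_of_all _ fun p => by simpa [Real.norm_eq_abs] using abs_gKer_le s v w p)
  obtain ⟨hIu, hEqu⟩ := huW w hwX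
  obtain ⟨hIv, hEqv⟩ := hvW w hwX
  have hsq : Integrable (fun x => w x * w x) (volume.restrict Ω) := by
    have := hwL2.integrable_sq
    simpa [sq] using this
  have huw : Integrable (fun x => u x * w x) (volume.restrict Ω) := by
    refine Integrable.mono' (huL2.integrable_sq.add hwL2.integrable_sq)
      ((humeas.mul hwmeas).aestronglyMeasurable) (ae_of_all _ fun x => ?_)
    simp only [Real.norm_eq_abs, abs_mul, Pi.add_apply]
    nlinarith [sq_nonneg (|u x| - |w x|), sq_abs (u x), sq_abs (w x),
      abs_nonneg (u x), abs_nonneg (w x)]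
  have hvw : Integrable (fun x => v x * w x) (volume.restrict Ω) := by
    refine Integrable.mono' (hvL2.integrable_sq.add hwL2.integrable_sq)
      ((hvmeas.mul hwmeas).aestronglyMeasurable) (ae_of_all _ fun x => ?_)
    simp only [Real.norm_eq_abs, abs_mul, Pi.add_apply]
    nlinarith [sq_nonneg (|v x| - |w x|), sq_abs (v x), sq_abs (w x),
      abs_nonneg (v x), abs_nonneg (w x)]
  have hA : (∫ x in Ω, u x * w x) - (∫ x in Ω, v x * w x) = ∫ x in Ω, w x * w x := by
    rw [← integral_sub huw hvw]
    refine integral_congr_ae (ae_of_all _ fun x => ?_)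
    simp only [hw]; ring
  have hE : bilinE s Ω u w - bilinE s Ω v w = bilinE s Ω w w := by
    have key : ∫ p in Qset Ω, gKer s w w p
        = (∫ p in Qset Ω, gKer s u w p) - ∫ p in Qset Ω, gKer s v w p := by
      rw [← integral_sub hGuw hGvw]
      refine integral_congr_ae (ae_of_all _ fun p => ?_)
      simp only [hw]
      exact gKer_sub_left s u v _ p
    unfold bilinE
    rw [key]; ring
  have hC : (∫ x in Ω, u x ^ (-q) * w x) - (∫ x in Ω, v x ^ (-q) * w x)
      = ∫ x in Ω, (u x ^ (-q) - v x ^ (-q)) * w x := by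
    rw [← integral_sub hIu hIv]
    refine integral_congr_ae (ae_of_all _ fun x => ?_)
    ring
  have hΩc : Ωᶜ.Nonempty := by
    haveI : Nonempty (Fin n) := Fin.pos_iff_nonempty.mp hn
    by_contra h
    rw [not_nonempty_iff_eq_empty, compl_empty_iff] at h
    exact NormedSpace.unbounded_univ ℝ (Eu n) (h ▸ hbd)
  have hupos := ae_pos_on hΩc hop huP
  have hvpos := ae_pos_on hΩc hop hvP
  have hCle : (∫ x in Ω, (u x ^ (-q) - v x ^ (-q)) * w x) ≤ 0 := by
    refine integral_nonpos_of_ae ?_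
    filter_upwards [hupos, hvpos] with x hu0 hv0
    have hwx : w x = u x - v x := rfl
    rcases le_total (u x) (v x) with h | h
    · have h1 : v x ^ (-q) ≤ u x ^ (-q) :=
        Real.rpow_le_rpow_of_nonpos hu0 h (neg_nonpos.mpr hq.le)
      have : (u x ^ (-q) - v x ^ (-q)) * w x ≤ 0 :=
        mul_nonpos_iff.mpr (Or.inl ⟨by linarith, by rw [hwx]; linarith⟩)
      simpa using this
    · have h1 : u x ^ (-q) ≤ v x ^ (-q) :=
        Real.rpow_le_rpow_of_nonpos hv0 h (neg_nonpos.mpr hq.le)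
      have : (u x ^ (-q) - v x ^ (-q)) * w x ≤ 0 :=
        mul_nonpos_iff.mpr (Or.inr ⟨by linarith, by rw [hwx]; linarith⟩)
      simpa using this
  have hAnn : 0 ≤ ∫ x in Ω, w x * w x := integral_nonneg fun x => mul_self_nonneg _
  have hCns : 0 ≤ Cns n s := by
    have h1 : 0 < Real.pi ^ (-(n : ℝ) / 2) := Real.rpow_pos_of_pos Real.pi_pos _
    have h2 : (0 : ℝ) < (2 : ℝ) ^ (2 * s - 1) := Real.rpow_pos_of_pos two_pos _
    have h3 : 0 < Real.Gamma (((n : ℝ) + 2 * s) / 2) :=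
      Real.Gamma_pos_of_pos (by positivity)
    have h4 : 0 < Real.Gamma (1 - s) := Real.Gamma_pos_of_pos (by linarith)
    exact le_of_lt (div_pos (mul_pos (mul_pos (mul_pos h1 h2) hs0) h3) h4)
  have hBnn : 0 ≤ bilinE s Ω w w :=
    mul_nonneg hCns (integral_nonneg fun p => gKer_self_nonneg s w p)
  have h0 : (∫ x in Ω, w x * w x)
      + lam * (bilinE s Ω w w - ∫ x in Ω, (u x ^ (-q) - v x ^ (-q)) * w x) = 0 := by
    linear_combination hEqu - hEqv - hA - lam * hE + lam * hC
  have hp1 : 0 ≤ lam * bilinE s Ω w w := mul_nonneg hlam.le hBnn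
  have hp2 : lam * (∫ x in Ω, (u x ^ (-q) - v x ^ (-q)) * w x) ≤ 0 :=
    mul_nonpos_iff.mpr (Or.inl ⟨hlam.le, hCle⟩)
  have hA0 : (∫ x in Ω, w x * w x) = 0 := by nlinarith [h0, hp1, hp2, hAnn]
  have hz := (integral_eq_zero_iff_of_nonneg_ae
    (ae_of_all _ fun x => mul_self_nonneg (w x)) hsq).mp hA0
  have hwz : ∀ᵐ x ∂(volume.restrict Ω), w x = 0 := by
    filter_upwards [hz] with x hx
    exact mul_self_eq_zero.mp hx
  rw [ae_restrict_iff' hop.measurableSet] at hwz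
  filter_upwards [hwz, huzero, hvzero] with x h1 h2 h3
  by_cases hx : x ∈ Ω
  · have := h1 hx
    have : u x - v x = 0 := this
    linarith
  · rw [h2 hx, h3 hx]
end
end

section
/- Let q>0 with q(2s−1) < 2s+1, λ>0, and f₁, f₂ ∈ L^∞(Ω). Let u, v ∈ X₀(Ω) ∩ 𝒞 be weak solutions of u + λ((−Δ)^s u − u^{-q}) = f₁ and v + λ((−Δ)^s v − v^{-q}) = f₂ respectively (with u = v = 0 in ℝⁿ∖Ω). Then ‖u − v‖_{L^∞(Ω)} ≤ ‖f₁ − f₂‖_{L^∞(Ω)}; in other words, the operator L(u) := (−Δ)^s u − u^{-q} is m-accretive in L^∞(Ω). -/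
open MeasureTheory Set Filter
open scoped ENNReal RealInnerProductSpace

noncomputable section

section AuxLemmas

variable {n : ℕ}


variable {n : ℕ}

lemma myCns_nonneg {s : ℝ} (hs0 : 0 < s) (hs1 : s < 1) (hn : 0 < n) : 0 ≤ Cns n s := by
  unfold Cns
  have h1 : 0 < Real.Gamma (1 - s) := Real.Gamma_pos_of_pos (by linarith)
  have h2 : 0 < Real.Gamma (((n : ℝ) + 2 * s) / 2) := Real.Gamma_pos_of_pos (by positivity)
  positivity

lemma mygKer_measurable {s : ℝ} {u v : Eu n → ℝ} (hu : Measurable u) (hv : Measurable v) :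
    Measurable (gKer s u v) := by
  apply Measurable.div
  · exact ((hu.comp measurable_fst).sub (hu.comp measurable_snd)).mul
      ((hv.comp measurable_fst).sub (hv.comp measurable_snd))
  · exact (measurable_fst.dist measurable_snd).pow measurable_const

lemma mygKer_self_nonneg {s : ℝ} {u : Eu n → ℝ} (p : Eu n × Eu n) : 0 ≤ gKer s u u p :=
  div_nonneg (mul_self_nonneg _) (Real.rpow_nonneg dist_nonneg _)

lemma mydiv_le_div {x y c : ℝ} (h : x ≤ y) (hc : 0 ≤ c) : x / c ≤ y / c := by
  rcases hc.eq_or_lt with h0 | h0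
  · rw [← h0]; simp
  · exact (div_le_div_iff_of_pos_right h0).mpr h

lemma myint_mul {α : Type*} [MeasurableSpace α] {μ : Measure α} {f g : α → ℝ}
    (hf : MemLp f 2 μ) (hg : MemLp g 2 μ) : Integrable (fun x => f x * g x) μ := by
  refine ((hf.integrable_sq.add hg.integrable_sq).div_const 2).mono'
    (hf.aestronglyMeasurable.mul hg.aestronglyMeasurable) (Eventually.of_forall fun x => ?_)
  simp only [Pi.add_apply]
  rw [Real.norm_eq_abs, abs_mul]
  nlinarith [sq_nonneg (|f x| - |g x|), sq_abs (f x), sq_abs (g x),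
    abs_nonneg (f x), abs_nonneg (g x)]

/-- a.e. positivity on `Ω` from positivity on compact subsets. -/
lemma mypos_ae {Ω : Set (Eu n)} (hΩo : IsOpen Ω) (hc : Ωᶜ.Nonempty) {u : Eu n → ℝ}
    (hum : Measurable u)
    (hpos : ∀ K : Set (Eu n), IsCompact K → K ⊆ Ω →
      ∃ c : ℝ, 0 < c ∧ ∀ᵐ x ∂(volume.restrict K), c ≤ u x) :
    ∀ᵐ x ∂(volume.restrict Ω), 0 < u x := by
  set K : ℕ → Set (Eu n) := fun m =>
    Metric.closedBall 0 m ∩ {x | 1 / (m + 1 : ℝ) ≤ Metric.infDist x Ωᶜ} with hK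
  have hKc : ∀ m, IsCompact (K m) := fun m =>
    (isCompact_closedBall _ _).inter_right
      (isClosed_le continuous_const (Metric.continuous_infDist_pt _))
  have hKΩ : ∀ m, K m ⊆ Ω := by
    intro m x hx
    by_contra hxΩ
    have h0 : Metric.infDist x Ωᶜ = 0 := Metric.infDist_zero_of_mem hxΩ
    have := hx.2
    rw [mem_setOf_eq, h0] at this
    have : (0 : ℝ) < 1 / (m + 1 : ℝ) := by positivity
    linarith
  rw [ae_iff, Measure.restrict_apply (by
    have : {x : Eu n | ¬ 0 < u x} = {x | u x ≤ 0} := by ext x; simp [not_lt]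
    rw [this]; exact measurableSet_le hum measurable_const)]
  have hcompl : {x : Eu n | ¬ 0 < u x} = {x | u x ≤ 0} := by
    ext x; simp [not_lt]
  rw [hcompl]
  refine measure_mono_null (t := ⋃ m, {x | u x ≤ 0} ∩ K m) ?_ (measure_iUnion_null fun m => ?_)
  · rintro x ⟨hux, hxΩ⟩
    have hd : 0 < Metric.infDist x Ωᶜ :=
      (hΩo.isClosed_compl.notMem_iff_infDist_pos hc).1 (by simpa using hxΩ)
    obtain ⟨m₁, hm₁⟩ := exists_nat_one_div_lt hd
    obtain ⟨m₂, hm₂⟩ := exists_nat_ge ‖x‖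
    refine mem_iUnion.2 ⟨max m₁ m₂, hux, ?_, ?_⟩
    · rw [Metric.mem_closedBall, dist_zero_right]
      exact hm₂.trans (by exact_mod_cast Nat.cast_le.2 (le_max_right m₁ m₂))
    · refine le_trans (le_trans ?_ hm₁.le) le_rfl
      apply one_div_le_one_div_of_le (by positivity)
      have : (m₁ : ℝ) ≤ (max m₁ m₂ : ℕ) := by exact_mod_cast le_max_left m₁ m₂
      linarith
  · obtain ⟨c, hc0, hcu⟩ := hpos (K m) (hKc m) (hKΩ m)
    have h0 : (volume.restrict (K m)) {x | ¬ c ≤ u x} = 0 := ae_iff.1 hcu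
    rw [Measure.restrict_apply (by
      have : {x : Eu n | ¬ c ≤ u x} = {x | u x < c} := by ext x; simp [not_le]
      rw [this]; exact measurableSet_lt hum measurable_const)] at h0
    refine measure_mono_null (fun x hx => ?_) h0
    exact ⟨by simp only [mem_setOf_eq, not_le]; exact lt_of_le_of_lt hx.1 hc0, hx.2⟩


set_option maxHeartbeats 2000000 in
lemma myoneside {s q lam : ℝ} (hs0 : 0 < s) (hs1 : s < 1) (hn : 0 < n)
    (hq : 0 < q) (hlam : 0 < lam)
    {Ω : Set (Eu n)} (hΩo : IsOpen Ω) (hbdd : Bornology.IsBounded Ω) (hc : Ωᶜ.Nonempty)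
    {f₁ f₂ u v : Eu n → ℝ} {M : ℝ} (hM : 0 ≤ M)
    (hfM : ∀ᵐ x ∂(volume.restrict Ω), f₁ x - f₂ x ≤ M)
    (hf₁ : MemLinfty Ω f₁) (hf₂ : MemLinfty Ω f₂)
    (hu : IsWeakSolS s q lam Ω f₁ u) (hv : IsWeakSolS s q lam Ω f₂ v) :
    ∀ᵐ x ∂(volume.restrict Ω), u x - v x ≤ M := by
  obtain ⟨⟨hum, hu0, huL2, huG⟩, hupos, huEq⟩ := hu
  obtain ⟨⟨hvm, hv0, hvL2, hvG⟩, hvpos, hvEq⟩ := hv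
  haveI : IsFiniteMeasure (volume.restrict Ω) :=
    ⟨by rw [Measure.restrict_apply_univ]; exact hbdd.measure_lt_top⟩
  set φ : Eu n → ℝ := fun x => max (u x - v x - M) 0 with hφdef
  have hφm : Measurable φ := ((hum.sub hvm).sub measurable_const).max measurable_const
  have hφ0 : ∀ x, 0 ≤ φ x := fun x => le_max_right _ _
  -- Lipschitz bound for the truncation
  have hlip : ∀ p : Eu n × Eu n, |φ p.1 - φ p.2| ≤ |(u p.1 - v p.1) - (u p.2 - v p.2)| := by
    intro p
    have := abs_max_sub_max_le_abs (u p.1 - v p.1 - M) (u p.2 - v p.2 - M) 0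
    calc |φ p.1 - φ p.2| ≤ |(u p.1 - v p.1 - M) - (u p.2 - v p.2 - M)| := this
      _ = |(u p.1 - v p.1) - (u p.2 - v p.2)| := by ring_nf
  -- square bound for kernel comparison
  have hsq : ∀ p : Eu n × Eu n, (φ p.1 - φ p.2) * (φ p.1 - φ p.2) ≤
      2 * ((u p.1 - u p.2) * (u p.1 - u p.2)) + 2 * ((v p.1 - v p.2) * (v p.1 - v p.2)) := by
    intro p
    have h1 := hlip p
    have h2 : (φ p.1 - φ p.2) * (φ p.1 - φ p.2) ≤
        ((u p.1 - v p.1) - (u p.2 - v p.2)) * ((u p.1 - v p.1) - (u p.2 - v p.2)) := by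
      have := abs_nonneg (φ p.1 - φ p.2)
      nlinarith [abs_mul_abs_self (φ p.1 - φ p.2),
        abs_mul_abs_self ((u p.1 - v p.1) - (u p.2 - v p.2))]
    nlinarith [sq_nonneg ((u p.1 - u p.2) + (v p.1 - v p.2))]
  set d : Eu n × Eu n → ℝ := fun p => dist p.1 p.2 ^ ((n : ℝ) + 2 * s) with hd
  have hd0 : ∀ p, 0 ≤ d p := fun p => Real.rpow_nonneg dist_nonneg _
  -- integrable majorant on Q
  have hmaj : Integrable (fun p => 2 * gKer s u u p + 2 * gKer s v v p)
      ((volume : Measure (Eu n × Eu n)).restrict (Qset Ω)) :=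
    (huG.const_mul 2).add (hvG.const_mul 2)
  -- φ ∈ X₀
  have hφL2 : MemLp φ 2 (volume.restrict Ω) := by
    refine (huL2.sub hvL2).of_le hφm.aestronglyMeasurable (Eventually.of_forall fun x => ?_)
    rw [Real.norm_eq_abs, Real.norm_eq_abs, abs_of_nonneg (hφ0 x)]
    exact max_le (le_trans (sub_le_self _ hM) (le_abs_self _)) (abs_nonneg _)
  have hφX0 : MemX0 s Ω φ := by
    refine ⟨hφm, ?_, hφL2, ?_⟩
    · filter_upwards [hu0, hv0] with x h1 h2 hx
      simp only [hφdef, h1 hx, h2 hx]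
      rw [max_eq_right (by linarith)]
    · refine hmaj.mono' (mygKer_measurable hφm hφm).aestronglyMeasurable
        (Eventually.of_forall fun p => ?_)
      have h1 : |gKer s φ φ p| = ((φ p.1 - φ p.2) * (φ p.1 - φ p.2)) / d p :=
        abs_of_nonneg (mygKer_self_nonneg p)
      rw [Real.norm_eq_abs, h1]
      have h2 : ((φ p.1 - φ p.2) * (φ p.1 - φ p.2)) / d p ≤
          (2 * ((u p.1 - u p.2) * (u p.1 - u p.2)) +
            2 * ((v p.1 - v p.2) * (v p.1 - v p.2))) / d p :=
        mydiv_le_div (hsq p) (hd0 p)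
      refine h2.trans (le_of_eq ?_)
      simp only [gKer, hd]
      ring
  obtain ⟨huInt, huE⟩ := huEq φ hφX0
  obtain ⟨hvInt, hvE⟩ := hvEq φ hφX0
  -- integrability facts on Ω
  have Iuφ : Integrable (fun x => u x * φ x) (volume.restrict Ω) := myint_mul huL2 hφL2
  have Ivφ : Integrable (fun x => v x * φ x) (volume.restrict Ω) := myint_mul hvL2 hφL2
  have Iφφ : Integrable (fun x => φ x * φ x) (volume.restrict Ω) := myint_mul hφL2 hφL2
  have Iφ : Integrable φ (volume.restrict Ω) := hφL2.integrable one_le_two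
  obtain ⟨hf₁m, M₁, hM₁⟩ := hf₁
  obtain ⟨hf₂m, M₂, hM₂⟩ := hf₂
  have If₁φ : Integrable (fun x => f₁ x * φ x) (volume.restrict Ω) := by
    refine (Iφ.abs.const_mul M₁).mono' (hf₁m.mul hφm).aestronglyMeasurable ?_
    filter_upwards [hM₁] with x hx
    rw [Real.norm_eq_abs, abs_mul]
    exact mul_le_mul_of_nonneg_right hx (abs_nonneg _)
  have If₂φ : Integrable (fun x => f₂ x * φ x) (volume.restrict Ω) := by
    refine (Iφ.abs.const_mul M₂).mono' (hf₂m.mul hφm).aestronglyMeasurable ?_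
    filter_upwards [hM₂] with x hx
    rw [Real.norm_eq_abs, abs_mul]
    exact mul_le_mul_of_nonneg_right hx (abs_nonneg _)
  set A := ∫ x in Ω, φ x * φ x with hA
  set B := ∫ x in Ω, φ x with hB
  -- Step a : ∫ uφ - ∫ vφ = A + M*B
  have stepa : (∫ x in Ω, u x * φ x) - (∫ x in Ω, v x * φ x) = A + M * B := by
    rw [← integral_sub Iuφ Ivφ]
    have : ∀ x, u x * φ x - v x * φ x = φ x * φ x + M * φ x := by
      intro x
      rcases le_or_gt (u x - v x - M) 0 with h | h
      · have : φ x = 0 := max_eq_right h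
        rw [this]; ring
      · have hφx : φ x = u x - v x - M := max_eq_left h.le
        rw [hφx]; ring
    rw [integral_congr_ae (Eventually.of_forall fun x => this x),
      integral_add Iφφ (Iφ.const_mul M), integral_const_mul]
  -- integrability of cross kernels
  have hcross : ∀ (w : Eu n → ℝ), Measurable w →
      (∀ p : Eu n × Eu n, |(w p.1 - w p.2) * (φ p.1 - φ p.2)| ≤
        2 * ((u p.1 - u p.2) * (u p.1 - u p.2)) +
        2 * ((v p.1 - v p.2) * (v p.1 - v p.2))) →
      Integrable (gKer s w φ) ((volume : Measure (Eu n × Eu n)).restrict (Qset Ω)) := by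
    intro w hwm hb
    refine hmaj.mono' (mygKer_measurable hwm hφm).aestronglyMeasurable
      (Eventually.of_forall fun p => ?_)
    rw [Real.norm_eq_abs]
    have h1 : |gKer s w φ p| = |(w p.1 - w p.2) * (φ p.1 - φ p.2)| / d p := by
      simp only [gKer, hd]
      rw [abs_div, abs_of_nonneg (Real.rpow_nonneg dist_nonneg _)]
    rw [h1]
    have h2 := mydiv_le_div (hb p) (hd0 p)
    refine h2.trans (le_of_eq ?_)
    simp only [gKer, hd]
    ring
  have hIu : Integrable (gKer s u φ) ((volume : Measure (Eu n × Eu n)).restrict (Qset Ω)) := by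
    refine hcross u hum fun p => ?_
    have h1 := hlip p
    have h3 : |φ p.1 - φ p.2| ≤ |u p.1 - u p.2| + |v p.1 - v p.2| := by
      refine h1.trans ?_
      have heq2 : u p.1 - v p.1 - (u p.2 - v p.2) = (u p.1 - u p.2) - (v p.1 - v p.2) := by ring
      rw [heq2]
      exact abs_sub _ _
    have h4 : |u p.1 - u p.2| * |φ p.1 - φ p.2| ≤
        |u p.1 - u p.2| * (|u p.1 - u p.2| + |v p.1 - v p.2|) :=
      mul_le_mul_of_nonneg_left h3 (abs_nonneg _)
    rw [abs_mul]
    nlinarith [h4, abs_mul_abs_self (u p.1 - u p.2), abs_mul_abs_self (v p.1 - v p.2),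
      sq_nonneg (|u p.1 - u p.2| - |v p.1 - v p.2|)]
  have hIv : Integrable (gKer s v φ) ((volume : Measure (Eu n × Eu n)).restrict (Qset Ω)) := by
    refine hcross v hvm fun p => ?_
    have h1 := hlip p
    have h3 : |φ p.1 - φ p.2| ≤ |u p.1 - u p.2| + |v p.1 - v p.2| := by
      refine h1.trans ?_
      have heq2 : u p.1 - v p.1 - (u p.2 - v p.2) = (u p.1 - u p.2) - (v p.1 - v p.2) := by ring
      rw [heq2]
      exact abs_sub _ _
    have h4 : |v p.1 - v p.2| * |φ p.1 - φ p.2| ≤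
        |v p.1 - v p.2| * (|u p.1 - u p.2| + |v p.1 - v p.2|) :=
      mul_le_mul_of_nonneg_left h3 (abs_nonneg _)
    rw [abs_mul]
    nlinarith [h4, abs_mul_abs_self (u p.1 - u p.2), abs_mul_abs_self (v p.1 - v p.2),
      sq_nonneg (|u p.1 - u p.2| - |v p.1 - v p.2|)]
  -- Step b : bilinE u φ - bilinE v φ ≥ 0
  have stepb : 0 ≤ bilinE s Ω u φ - bilinE s Ω v φ := by
    rw [bilinE, bilinE, ← mul_sub, ← integral_sub hIu hIv]
    refine mul_nonneg (myCns_nonneg hs0 hs1 hn) (integral_nonneg fun p => ?_)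
    have heq : gKer s u φ p - gKer s v φ p =
        ((u p.1 - v p.1) - (u p.2 - v p.2)) * (φ p.1 - φ p.2) / d p := by
      simp only [gKer, hd]; ring
    rw [heq]
    refine div_nonneg ?_ (hd0 p)
    rcases le_total (u p.1 - v p.1) (u p.2 - v p.2) with h | h
    · have h2 : φ p.1 ≤ φ p.2 := max_le_max (by linarith) le_rfl
      nlinarith
    · have h2 : φ p.2 ≤ φ p.1 := max_le_max (by linarith) le_rfl
      nlinarith
  -- Step c : ∫ u^{-q} φ ≤ ∫ v^{-q} φ
  have hupos' : ∀ᵐ x ∂(volume.restrict Ω), 0 < u x := mypos_ae hΩo hc hum hupos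
  have hvpos' : ∀ᵐ x ∂(volume.restrict Ω), 0 < v x := mypos_ae hΩo hc hvm hvpos
  have stepc : (∫ x in Ω, u x ^ (-q) * φ x) ≤ ∫ x in Ω, v x ^ (-q) * φ x := by
    refine integral_mono_ae huInt hvInt ?_
    filter_upwards [hupos', hvpos'] with x hux hvx
    rcases le_or_gt (u x - v x - M) 0 with h | h
    · have : φ x = 0 := max_eq_right h
      rw [this]; simp
    · refine mul_le_mul_of_nonneg_right ?_ (hφ0 x)
      exact Real.rpow_le_rpow_of_nonpos hvx (by linarith) (by linarith)
  -- Step d : ∫ f₁φ - ∫ f₂φ ≤ M * B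
  have stepd : (∫ x in Ω, f₁ x * φ x) - (∫ x in Ω, f₂ x * φ x) ≤ M * B := by
    rw [← integral_sub If₁φ If₂φ]
    have : M * B = ∫ x in Ω, M * φ x := (integral_const_mul M φ).symm
    rw [this]
    refine integral_mono_ae (If₁φ.sub If₂φ) (Iφ.const_mul M) ?_
    filter_upwards [hfM] with x hx
    have : f₁ x * φ x - f₂ x * φ x = (f₁ x - f₂ x) * φ x := by ring
    rw [this]
    exact mul_le_mul_of_nonneg_right hx (hφ0 x)
  -- combine
  have hA0 : 0 ≤ A := integral_nonneg fun x => mul_self_nonneg _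
  have hAzero : A = 0 := by
    have hkey : A + M * B + lam * (bilinE s Ω u φ - bilinE s Ω v φ)
        - lam * ((∫ x in Ω, u x ^ (-q) * φ x) - ∫ x in Ω, v x ^ (-q) * φ x)
        = (∫ x in Ω, f₁ x * φ x) - (∫ x in Ω, f₂ x * φ x) := by
      rw [← stepa]; linarith [huE, hvE]
    have h1 : 0 ≤ lam * (bilinE s Ω u φ - bilinE s Ω v φ) := mul_nonneg hlam.le stepb
    have h2 : lam * ((∫ x in Ω, u x ^ (-q) * φ x) - ∫ x in Ω, v x ^ (-q) * φ x) ≤ 0 :=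
      mul_nonpos_of_nonneg_of_nonpos hlam.le (by linarith)
    linarith [stepd, hA0]
  have hφzero : ∀ᵐ x ∂(volume.restrict Ω), φ x * φ x = 0 := by
    have := (integral_eq_zero_iff_of_nonneg_ae
      (Eventually.of_forall fun x => mul_self_nonneg (φ x)) Iφφ).1 hAzero
    filter_upwards [this] with x hx
    simpa using hx
  filter_upwards [hφzero] with x hx
  have hφx : φ x = 0 := by
    rcases mul_self_eq_zero.1 hx with h
    exact h
  by_contra h
  push_neg at h
  have : φ x = u x - v x - M := max_eq_left (by linarith)
  rw [hφx] at this
  linarith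

/-- `L^∞` contraction (m-accretivity of `L(u) = (−Δ)^s u − u^{-q}`) for the
stationary problem. -/
theorem statement_7
    {n : ℕ} {s : ℝ} (hs0 : 0 < s) (hs1 : s < 1) (hns : 2 * s < (n : ℝ))
    {Ω : Set (Eu n)} (hΩ : GoodDomain Ω) {r : ℝ} (hr : Metric.diam Ω < r)
    {q lam : ℝ} (hq : 0 < q) (hqs : q * (2 * s - 1) < 2 * s + 1) (hlam : 0 < lam)
    {f₁ f₂ : Eu n → ℝ} (hf₁ : MemLinfty Ω f₁) (hf₂ : MemLinfty Ω f₂)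
    {u v : Eu n → ℝ}
    (hu : IsWeakSolS s q lam Ω f₁ u) (hucone : InCone s q r Ω u)
    (hv : IsWeakSolS s q lam Ω f₂ v) (hvcone : InCone s q r Ω v) :
    eLpNorm (fun x => u x - v x) ⊤ (volume.restrict Ω) ≤
      eLpNorm (fun x => f₁ x - f₂ x) ⊤ (volume.restrict Ω) := by
  obtain ⟨hΩo, hbdd, hconn, _⟩ := hΩ
  by_cases hR : eLpNorm (fun x => f₁ x - f₂ x) ⊤ (volume.restrict Ω) = ⊤
  · rw [hR]; exact le_top
  set R := eLpNorm (fun x => f₁ x - f₂ x) ⊤ (volume.restrict Ω) with hRdef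
  set M := R.toReal with hMdef
  have hM : 0 ≤ M := ENNReal.toReal_nonneg
  have hbd : ∀ᵐ x ∂(volume.restrict Ω), |f₁ x - f₂ x| ≤ M := by
    have h1 := ae_le_eLpNormEssSup (f := fun x => f₁ x - f₂ x) (μ := volume.restrict Ω)
    filter_upwards [h1] with x hx
    have h2 : ((‖f₁ x - f₂ x‖₊ : ℝ≥0∞)).toReal ≤ R.toReal :=
      ENNReal.toReal_mono hR (by rw [hRdef, eLpNorm_exponent_top]; exact hx)
    simpa [← Real.norm_eq_abs] using h2
  have hn : 0 < n := by
    have h0 : (0 : ℝ) < (n : ℝ) := by linarith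
    exact_mod_cast h0
  have hc : Ωᶜ.Nonempty := by
    obtain ⟨Rb, hRb⟩ := hbdd.subset_closedBall 0
    haveI : Nonempty (Fin n) := ⟨⟨0, hn⟩⟩
    obtain ⟨x, hx⟩ := NormedSpace.exists_lt_norm ℝ (Eu n) Rb
    exact ⟨x, fun hxΩ => absurd (mem_closedBall_zero_iff.1 (hRb hxΩ)) (not_le.2 hx)⟩
  have h1 : ∀ᵐ x ∂(volume.restrict Ω), u x - v x ≤ M := by
    refine myoneside hs0 hs1 hn hq hlam hΩo hbdd hc hM ?_ hf₁ hf₂ hu hv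
    filter_upwards [hbd] with x hx
    exact (le_abs_self _).trans hx
  have h2 : ∀ᵐ x ∂(volume.restrict Ω), v x - u x ≤ M := by
    refine myoneside hs0 hs1 hn hq hlam hΩo hbdd hc hM ?_ hf₂ hf₁ hv hu
    filter_upwards [hbd] with x hx
    rw [abs_sub_comm] at hx
    exact (le_abs_self _).trans hx
  have hfinal : ∀ᵐ x ∂(volume.restrict Ω), ‖u x - v x‖ ≤ M := by
    filter_upwards [h1, h2] with x hx1 hx2
    rw [Real.norm_eq_abs]
    exact abs_le.2 ⟨by linarith, hx1⟩
  calc eLpNorm (fun x => u x - v x) ⊤ (volume.restrict Ω)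
      = eLpNormEssSup (fun x => u x - v x) (volume.restrict Ω) := eLpNorm_exponent_top
    _ ≤ ENNReal.ofReal M := eLpNormEssSup_le_of_ae_bound hfinal
    _ = R := by rw [hMdef, ENNReal.ofReal_toReal hR]
end AuxLemmas
end
end
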